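/- For natural numbers n ≤ L and any m ∈ {0,...,L}, the indicator 1{m = n} equals the alternating sum over ℓ from n to L of (-1)^{ℓ-n} · choose (L) (ℓ) · choose (ℓ) (n) · (choose m ℓ / choose L ℓ) · 1{m ≥ ℓ}. (Pointwise monomial decomposition of the Bernstein constraint in terms of reduced PMM constraints.) -/

import Mathlib

open Finset

theorem bernstein_monomial_decomposition (L n m : ℕ) (hn : n ≤ L) (hm : m ≤ L) :
    (if m = n then (1 : ℚ) else 0) =
      ∑ ℓ ∈ Finset.Icc n L,
        (-1 : ℚ) ^ (ℓ - n) * (L.choose ℓ) * (ℓ.choose n) *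
          ((m.choose ℓ : ℚ) / (L.choose ℓ)) * (if ℓ ≤ m then 1 else 0) := by
  -- simplify each term
  have hterm : ∀ ℓ ∈ Finset.Icc n L,
      (-1 : ℚ) ^ (ℓ - n) * (L.choose ℓ) * (ℓ.choose n) *
        ((m.choose ℓ : ℚ) / (L.choose ℓ)) * (if ℓ ≤ m then 1 else 0)
      = (-1 : ℚ) ^ (ℓ - n) * (ℓ.choose n) * (m.choose ℓ) := by
    intro ℓ hℓ
    rw [Finset.mem_Icc] at hℓ
    have hL : (L.choose ℓ : ℚ) ≠ 0 := Nat.cast_ne_zero.mpr (Nat.choose_pos hℓ.2).ne'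
    by_cases h : ℓ ≤ m
    · rw [if_pos h]; field_simp
    · rw [if_neg h, Nat.choose_eq_zero_of_lt (lt_of_not_ge h)]
      simp
  rw [Finset.sum_congr rfl hterm]
  by_cases hmn : n ≤ m
  · -- restrict sum to Icc n m
    have hsub : Finset.Icc n m ⊆ Finset.Icc n L := Finset.Icc_subset_Icc_right hm
    rw [← Finset.sum_subset hsub (by
      intro ℓ hℓ hℓ'
      rw [Finset.mem_Icc] at hℓ
      rw [Finset.mem_Icc] at hℓ'
      have : m < ℓ := by omega
      rw [Nat.choose_eq_zero_of_lt this]; simp)]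
    -- use choose_mul : m.choose ℓ * ℓ.choose n = m.choose n * (m-n).choose (ℓ-n)
    have h2 : ∀ ℓ ∈ Finset.Icc n m,
        (-1 : ℚ) ^ (ℓ - n) * (ℓ.choose n) * (m.choose ℓ)
        = (m.choose n : ℚ) * ((-1 : ℚ) ^ (ℓ - n) * ((m - n).choose (ℓ - n))) := by
      intro ℓ hℓ
      rw [Finset.mem_Icc] at hℓ
      have : m.choose ℓ * ℓ.choose n = m.choose n * (m - n).choose (ℓ - n) := Nat.choose_mul hℓ.1
      have : (m.choose ℓ : ℚ) * (ℓ.choose n) = (m.choose n) * ((m - n).choose (ℓ - n)) := by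
        exact_mod_cast congrArg (Nat.cast : ℕ → ℚ) this
      linear_combination ((-1 : ℚ)) ^ (ℓ - n) * this
    rw [Finset.sum_congr rfl h2, ← Finset.mul_sum]
    -- reindex j = ℓ - n
    have : ∑ ℓ ∈ Finset.Icc n m, (-1 : ℚ) ^ (ℓ - n) * ((m - n).choose (ℓ - n))
        = ∑ j ∈ Finset.range (m - n + 1), (-1 : ℚ) ^ j * ((m - n).choose j) := by
      rw [Finset.range_eq_Ico, ← Finset.Ico_add_one_right_eq_Icc]
      apply Finset.sum_nbij' (fun ℓ => ℓ - n) (fun j => j + n)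
      · intro ℓ hℓ; simp only [Finset.mem_Ico] at hℓ ⊢; omega
      · intro j hj; simp only [Finset.mem_Ico] at hj ⊢; omega
      · intro ℓ hℓ; simp only [Finset.mem_Ico] at hℓ; omega
      · intro j hj; simp only [Finset.mem_Ico] at hj; omega
      · intro ℓ hℓ; rfl
    rw [this]
    have key := Int.alternating_sum_range_choose (n := m - n)
    have : ∑ j ∈ Finset.range (m - n + 1), (-1 : ℚ) ^ j * ((m - n).choose j)
        = if m - n = 0 then 1 else 0 := by
      have := congrArg (Int.cast : ℤ → ℚ) key
      push_cast at this
      convert this using 2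
    rw [this]
    by_cases h : m = n
    · subst h; simp
    · rw [if_neg h, if_neg (by omega)]; simp
  · -- m < n: everything vanishes
    rw [if_neg (by omega)]
    symm
    apply Finset.sum_eq_zero
    intro ℓ hℓ
    rw [Finset.mem_Icc] at hℓ
    rw [Nat.choose_eq_zero_of_lt (show m < ℓ by omega)]
    simp
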